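/- Let p > 3 be a prime, m a positive integer, and n = 2m, and suppose p^m ≡ 2 (mod 3). Let α be a generator of the multiplicative group of F_{p^n}. For nonzero c ∈ F_{p^n}, the element D = c̄^2 - c̄·c + c^2 equals zero (where c̄ = c^{p^m}) if and only if there exists j ∈ {0, 1, ..., p^m - 2} such that c = α^{(p^m+1)/6 + j(p^m+1)} or c = α^{5(p^m+1)/6 + j(p^m+1)}. -/
import Mathlib

/-- Let `p > 3` be prime, `n = 2m`, `p^m ≡ 2 (mod 3)`, and `α` a generator of the
multiplicative group of `F_{p^n}`. For nonzero `c`, `D = c̄² - c̄·c + c² = 0` (with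
`c̄ = c^(p^m)`) iff `c = α^((p^m+1)/6 + j(p^m+1))` or `c = α^(5(p^m+1)/6 + j(p^m+1))`
for some `j ∈ {0, 1, ..., p^m - 2}`. -/
theorem stmt11 (p : ℕ) (hp : p.Prime) (hp3 : 3 < p) (m : ℕ) (hm : 0 < m) (n : ℕ)
    (hn : n = 2 * m) (hmod : p ^ m % 3 = 2)
    (F : Type*) [Field F] [Fintype F]
    (hF : Fintype.card F = p ^ n)
    (α : F) (hα : orderOf α = p ^ n - 1) :
    ∀ c : F, c ≠ 0 →
      ((c ^ p ^ m) ^ 2 - c ^ p ^ m * c + c ^ 2 = 0 ↔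
        ∃ j, j < p ^ m - 1 ∧
          (c = α ^ ((p ^ m + 1) / 6 + j * (p ^ m + 1)) ∨
           c = α ^ (5 * (p ^ m + 1) / 6 + j * (p ^ m + 1)))) := by
  intro c hc
  set q : ℕ := p ^ m with hqdef
  -- basic numerics
  have hp4 : p ≠ 4 := by intro h; rw [h] at hp; norm_num at hp
  have hp5 : 5 ≤ p := by have := hp.two_le; omega
  have hq5 : 5 ≤ q := le_trans hp5 (Nat.le_self_pow hm.ne' p)
  have hoddq : q % 2 = 1 := Nat.odd_iff.1 ((hp.odd_of_ne_two (by omega)).pow)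
  have ht6 : 6 ∣ q + 1 := by omega
  obtain ⟨t, ht⟩ := ht6
  have ht0 : 0 < t := by omega
  have he1 : (q + 1) / 6 = t := by omega
  have he2 : 5 * (q + 1) / 6 = 5 * t := by omega
  have hcard : Fintype.card F = q ^ 2 := by rw [hF, hn, mul_comm, pow_mul]
  set N : ℕ := q ^ 2 - 1 with hNdef
  have hNf : N = (q - 1) * (q + 1) := by
    have hgen2 : ∀ a : ℕ, 1 ≤ a → a * a = (a - 1) * (a + 1) + 1 := by
      intro a ha
      obtain ⟨r, rfl⟩ := Nat.exists_eq_add_of_le ha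
      simp only [Nat.add_sub_cancel_left]
      ring
    have h := hgen2 q (by omega)
    rw [← pow_two] at h
    omega
  have hN0 : 0 < N := by
    have : q * q ≥ 25 := Nat.mul_le_mul hq5 hq5
    have : q ^ 2 ≥ 25 := by rwa [pow_two]
    omega
  have hαord : orderOf α = N := by
    rw [hα, hn, mul_comm, pow_mul]
  have hαN : α ^ N = 1 := by rw [← hαord]; exact pow_orderOf_eq_one α
  have hα0 : α ≠ 0 := by
    intro h
    rw [h, zero_pow hN0.ne'] at hαN
    exact zero_ne_one hαN
  -- α generates the nonzero elements
  set u : Fˣ := Units.mk0 α hα0 with hudef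
  have huval : (u : F) = α := rfl
  have huord : orderOf u = N := by rw [← orderOf_units, huval, hαord]
  have hcardU : Nat.card Fˣ = N := by
    rw [Nat.card_units, Nat.card_eq_fintype_card, hcard]
  have hgen : ∀ v : Fˣ, ∃ k, k < N ∧ v = u ^ k := by
    intro v
    have h1 : v ∈ Subgroup.zpowers u := by
      have htop : Subgroup.zpowers u = ⊤ := by
        apply Subgroup.eq_top_of_card_eq
        rw [Nat.card_zpowers, huord, hcardU]
      rw [htop]; trivial
    rw [← mem_powers_iff_mem_zpowers] at h1
    obtain ⟨k, hk⟩ := h1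
    refine ⟨k % N, Nat.mod_lt _ hN0, ?_⟩
    rw [← hk, ← huord, pow_mod_orderOf]
  -- the key counting equivalence
  have key : ∀ e : ℕ, e < q + 1 →
      (c ^ (q - 1) = α ^ (e * (q - 1)) ↔
        ∃ j, j < q - 1 ∧ c = α ^ (e + j * (q + 1))) := by
    intro e he
    constructor
    · intro hx
      obtain ⟨k, hk, hck⟩ := hgen (Units.mk0 c hc)
      have hcα : c = α ^ k := by
        have := congrArg (Units.val) hck
        simpa [huval] using this
      have heq : α ^ (k * (q - 1)) = α ^ (e * (q - 1)) := by
        rw [pow_mul, ← hcα, hx]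
      have hueq : u ^ (k * (q - 1)) = u ^ (e * (q - 1)) := by
        apply Units.ext
        simpa [huval] using heq
      have hmodN : k * (q - 1) ≡ e * (q - 1) [MOD N] := by
        rw [← huord]; exact pow_eq_pow_iff_modEq.1 hueq
      have hmodq : k ≡ e [MOD q + 1] := by
        apply Nat.ModEq.mul_right_cancel' (c := q - 1) (by omega)
        rwa [hNf, mul_comm (q - 1)] at hmodN
      have hmodk : k % (q + 1) = e := by
        have h' : k % (q + 1) = e % (q + 1) := hmodq
        rwa [Nat.mod_eq_of_lt he] at h'
      have hdm := Nat.div_add_mod k (q + 1)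
      rw [hmodk] at hdm
      refine ⟨k / (q + 1), ?_, ?_⟩
      · refine (Nat.div_lt_iff_lt_mul (by omega)).2 ?_
        rw [← hNf]; exact hk
      · rw [hcα]
        congr 1
        rw [mul_comm (k / (q + 1))]
        exact (hdm.symm.trans (add_comm _ _))
    · rintro ⟨j, hj, rfl⟩
      rw [← pow_mul]
      have hexp : (e + j * (q + 1)) * (q - 1) = e * (q - 1) + (q - 1) * (q + 1) * j := by
        ring
      have h1 : α ^ ((q - 1) * (q + 1) * j) = 1 := by
        rw [pow_mul, ← hNf, hαN, one_pow]
      rw [hexp, pow_add, h1, mul_one]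
  -- the primitive 6th root β
  set s : ℕ := t * (q - 1) with hsdef
  have hs0 : 0 < s := Nat.mul_pos ht0 (by omega)
  have hNs : N = 6 * s := by rw [hNf, ht, hsdef]; ring
  set β : F := α ^ s with hβdef
  have hβ6 : β ^ 6 = 1 := by rw [hβdef, ← pow_mul, mul_comm, ← hNs, hαN]
  have hne1 : ∀ r : ℕ, 0 < r → r < N → α ^ r ≠ 1 := by
    intro r hr0 hrN h1
    have := orderOf_dvd_of_pow_eq_one h1
    rw [hαord] at this
    exact absurd (Nat.le_of_dvd hr0 this) (by omega)
  have hβ3 : β ^ 3 = -1 := by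
    have h2 : (β ^ 3 - 1) * (β ^ 3 + 1) = 0 := by linear_combination hβ6
    rcases mul_eq_zero.1 h2 with h | h
    · exfalso
      have h3 : β ^ 3 = 1 := sub_eq_zero.1 h
      rw [hβdef, ← pow_mul] at h3
      exact hne1 (s * 3) (by omega) (by omega) h3
    · exact eq_neg_of_add_eq_zero_left h
  have hβne : β ≠ -1 := by
    intro h
    have h2 : β ^ 2 = 1 := by rw [h]; ring
    rw [hβdef, ← pow_mul] at h2
    exact hne1 (s * 2) (by omega) (by omega) h2
  have hβquad : β ^ 2 - β + 1 = 0 := by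
    have h2 : (β + 1) * (β ^ 2 - β + 1) = 0 := by linear_combination hβ3
    rcases mul_eq_zero.1 h2 with h | h
    · exact absurd (eq_neg_of_add_eq_zero_left h) hβne
    · exact h
  have hβ5 : β ^ 5 = 1 - β := by linear_combination β ^ 2 * hβ3 - hβquad
  have hquad : ∀ x : F, x ^ 2 - x + 1 = 0 ↔ (x = β ∨ x = β ^ 5) := by
    intro x
    have hfac : x ^ 2 - x + 1 = (x - β) * (x - β ^ 5) := by
      rw [hβ5]; linear_combination hβquad
    rw [hfac, mul_eq_zero, sub_eq_zero, sub_eq_zero]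
  -- identify β and β^5 as the right powers of α
  have hβe : β = α ^ (t * (q - 1)) := rfl
  have hβ5e : β ^ 5 = α ^ (5 * t * (q - 1)) := by
    rw [hβdef, ← pow_mul, hsdef]; ring_nf
  -- assemble
  have hcq : c ^ q = c ^ (q - 1) * c := by
    rw [← pow_succ]; congr 1; omega
  have hD : (c ^ q) ^ 2 - c ^ q * c + c ^ 2
      = c ^ 2 * ((c ^ (q - 1)) ^ 2 - c ^ (q - 1) + 1) := by
    rw [hcq]; ring
  have hc2 : c ^ 2 ≠ 0 := pow_ne_zero 2 hc
  rw [hD, he1, he2]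
  constructor
  · intro h
    have hx : (c ^ (q - 1)) ^ 2 - c ^ (q - 1) + 1 = 0 := by
      rcases mul_eq_zero.1 h with h | h
      · exact absurd h hc2
      · exact h
    rcases (hquad _).1 hx with h | h
    · obtain ⟨j, hj, hcj⟩ := (key t (by omega)).1 (by rw [h, hβe])
      exact ⟨j, hj, Or.inl hcj⟩
    · obtain ⟨j, hj, hcj⟩ := (key (5 * t) (by omega)).1 (by rw [h, hβ5e])
      exact ⟨j, hj, Or.inr hcj⟩
  · rintro ⟨j, hj, h | h⟩
    · have hx := (key t (by omega)).2 ⟨j, hj, h⟩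
      rw [← hβe] at hx
      rw [(hquad _).2 (Or.inl hx), mul_zero]
    · have hx := (key (5 * t) (by omega)).2 ⟨j, hj, h⟩
      rw [← hβ5e] at hx
      rw [(hquad _).2 (Or.inr hx), mul_zero]
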